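/- Let A be the linear operator from L²([0,1]) to L²([0,1]²) defined by (A[h])(y,v) = -e^{αv} ∫₀^y h(s) ds + h(y)/λ(y), where α ∈ ℝ is fixed and λ : [0,1] → ℝ is continuous with λ(y) ≥ c > 0 for all y. Then A is injective, and there exists a constant C > 0 such that ‖A[h]‖_{L²([0,1]²)} ≥ C ‖h‖_{L²([0,1])} for all h ∈ L²([0,1]). -/

import Mathlib

open MeasureTheory Set

set_option maxHeartbeats 1600000

lemma sq_integral_le' {Ω : Type*} [MeasurableSpace Ω] {μ : Measure Ω} [IsProbabilityMeasure μ]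
    {f : Ω → ℝ} (hf : MemLp f 2 μ) : (∫ x, f x ∂μ) ^ 2 ≤ ∫ x, f x ^ 2 ∂μ := by
  have h1 := ProbabilityTheory.variance_nonneg f μ
  rw [ProbabilityTheory.variance_eq_sub hf] at h1
  have h2 : ∫ x, (f ^ 2) x ∂μ = ∫ x, f x ^ 2 ∂μ := by simp
  linarith

/-- The operator `A[h](y,v) = -e^{αv} ∫₀^y h(s) ds + h(y)/λ(y)` from `L²([0,1])` to
`L²([0,1]²)` is injective and bounded below: there is `C > 0` with
`‖A[h]‖_{L²([0,1]²)} ≥ C ‖h‖_{L²([0,1])}` for all `h ∈ L²([0,1])`. -/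
theorem stmt0 (α : ℝ) (lam : ℝ → ℝ) (hlamc : ContinuousOn lam (Icc 0 1))
    (c : ℝ) (hc : 0 < c) (hlam : ∀ y ∈ Icc (0:ℝ) 1, c ≤ lam y) :
    ∃ C : ℝ, 0 < C ∧ ∀ h : ℝ → ℝ, Measurable h →
      MemLp h 2 (volume.restrict (Icc (0:ℝ) 1)) →
      (C ^ 2 * ∫ y in Icc (0:ℝ) 1, h y ^ 2 ≤
        ∫ p in (Icc (0:ℝ) 1) ×ˢ (Icc (0:ℝ) 1),
          (-(Real.exp (α * p.2)) * (∫ s in (0:ℝ)..p.1, h s) + h p.1 / lam p.1) ^ 2) ∧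
      ((∀ᵐ p ∂(volume.restrict ((Icc (0:ℝ) 1) ×ˢ (Icc (0:ℝ) 1))),
          -(Real.exp (α * p.2)) * (∫ s in (0:ℝ)..p.1, h s) + h p.1 / lam p.1 = 0) →
        (∀ᵐ y ∂(volume.restrict (Icc (0:ℝ) 1)), h y = 0)) := by
  -- the measure
  set μ : Measure ℝ := volume.restrict (Icc (0:ℝ) 1) with hμ
  haveI : IsProbabilityMeasure μ := by
    constructor
    rw [hμ, Measure.restrict_apply_univ, Real.volume_Icc]
    norm_num
  -- a bound on lam
  obtain ⟨M0, hM0⟩ : ∃ M0, ∀ y ∈ Icc (0:ℝ) 1, lam y ≤ M0 := by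
    obtain ⟨M0, hM0⟩ := (isCompact_Icc.image_of_continuousOn hlamc).bddAbove
    exact ⟨M0, fun y hy => hM0 ⟨y, hy, rfl⟩⟩
  set M : ℝ := max M0 c with hMdef
  have hM : ∀ y ∈ Icc (0:ℝ) 1, lam y ≤ M := fun y hy => (hM0 y hy).trans (le_max_left _ _)
  have hMc : c ≤ M := le_max_right _ _
  have hMpos : 0 < M := lt_of_lt_of_le hc hMc
  -- the kernel and its integral
  set K : ℝ → ℝ := fun v => Real.exp (α * v) with hK
  have hKcont : Continuous K := by continuity
  set b : ℝ := ∫ v, K v ∂μ with hb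
  have hKlb : ∀ v ∈ Icc (0:ℝ) 1, Real.exp (-|α|) ≤ K v := by
    intro v hv
    apply Real.exp_le_exp.2
    have h1 : |α * v| ≤ |α| := by
      rw [abs_mul]
      calc |α| * |v| ≤ |α| * 1 := by
            apply mul_le_mul_of_nonneg_left _ (abs_nonneg α)
            rw [abs_le]; constructor <;> linarith [hv.1, hv.2]
          _ = |α| := mul_one _
    linarith [(abs_le.1 h1).1]
  have hbpos : 0 < b := by
    have h1 : ∫ v, Real.exp (-|α|) ∂μ ≤ ∫ v, K v ∂μ := by
      apply integral_mono_of_nonneg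
      · filter_upwards with v using le_of_lt (Real.exp_pos _)
      · exact (hKcont.integrableOn_Icc)
      · filter_upwards [ae_restrict_mem measurableSet_Icc] with v hv using hKlb v hv
    have h2 : ∫ v, Real.exp (-|α|) ∂μ = Real.exp (-|α|) := by
      simp [integral_const, measure_univ]
    rw [hb]
    calc (0:ℝ) < Real.exp (-|α|) := Real.exp_pos _
      _ = ∫ v, Real.exp (-|α|) ∂μ := h2.symm
      _ ≤ _ := h1
  -- the constants
  set B : ℝ := M * Real.exp (M * b) with hBdef
  have hBpos : 0 < B := mul_pos hMpos (Real.exp_pos _)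
  set D : ℝ := M ^ 2 * (2 * b ^ 2 * B ^ 2 + 2) with hDdef
  have hDpos : 0 < D := by positivity
  refine ⟨Real.sqrt (1 / D), Real.sqrt_pos.2 (by positivity), ?_⟩
  intro h hmeas hmem
  have hC2 : Real.sqrt (1 / D) ^ 2 = 1 / D := Real.sq_sqrt (by positivity)
  -- notation
  set F : ℝ → ℝ := fun y => ∫ s in (0:ℝ)..y, h s with hFdef
  set g : ℝ → ℝ := fun y => h y / lam y with hgdef
  set e : ℝ → ℝ := fun y => g y - b * F y with hedef
  -- basic integrability and measurability facts
  have hInt_h : IntegrableOn h (Icc (0:ℝ) 1) := hmem.integrable (by norm_num)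
  have hInt_h' : IntegrableOn h (uIcc (0:ℝ) 1) := by rwa [uIcc_of_le zero_le_one]
  have hF_cont : ContinuousOn F (Icc (0:ℝ) 1) := by
    have := intervalIntegral.continuousOn_primitive_interval (μ := volume) (a := (0:ℝ)) (b := 1) hInt_h'
    rwa [uIcc_of_le zero_le_one] at this
  have hF_meas : AEStronglyMeasurable F μ := hF_cont.aestronglyMeasurable measurableSet_Icc
  obtain ⟨FB, hFB⟩ : ∃ FB, ∀ y ∈ Icc (0:ℝ) 1, ‖F y‖ ≤ FB :=
    isCompact_Icc.exists_bound_of_continuousOn hF_cont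
  have hg_meas : AEStronglyMeasurable g μ := by
    exact ((hmeas.aemeasurable).div (hlamc.aemeasurable measurableSet_Icc)).aestronglyMeasurable
  have hg_le : ∀ y ∈ Icc (0:ℝ) 1, |g y| ≤ |h y| / c := by
    intro y hy
    rw [hgdef, abs_div, abs_of_pos (lt_of_lt_of_le hc (hlam y hy))]
    exact div_le_div_of_nonneg_left (abs_nonneg _) hc (hlam y hy)
  have hg_mem : MemLp g 2 μ := by
    refine MemLp.of_le (hmem.const_mul (1/c)) hg_meas ?_
    filter_upwards [ae_restrict_mem measurableSet_Icc] with y hy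
    have := hg_le y hy
    rw [Real.norm_eq_abs, Real.norm_eq_abs, abs_mul, abs_of_pos (by positivity : (0:ℝ) < 1/c)]
    calc |g y| ≤ |h y| / c := this
      _ = 1/c * |h y| := by ring
  have hF_mem : MemLp F 2 μ := by
    refine MemLp.of_bound hF_meas FB ?_
    filter_upwards [ae_restrict_mem measurableSet_Icc] with y hy using hFB y hy
  have he_mem : MemLp e 2 μ := by
    have : e = g - fun y => b * F y := by funext y; simp [hedef]
    rw [this]
    exact hg_mem.sub (hF_mem.const_mul b)
  have he_int : Integrable e μ := he_mem.integrable one_le_two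
  -- the product measure
  set ν2 : Measure (ℝ × ℝ) := μ.prod μ with hν2
  have hmeq : (volume : Measure (ℝ × ℝ)).restrict ((Icc (0:ℝ) 1) ×ˢ (Icc (0:ℝ) 1)) = ν2 := by
    rw [hν2, hμ, Measure.prod_restrict]
    rfl
  set q : ℝ × ℝ → ℝ := fun p => (-(K p.2) * F p.1 + g p.1) ^ 2 with hq
  have hq_meas : AEStronglyMeasurable q ν2 := by
    have h1 : AEStronglyMeasurable (fun p : ℝ × ℝ => -(K p.2) * F p.1 + g p.1) ν2 :=
      (((hKcont.aestronglyMeasurable (μ := μ)).comp_snd (μ := μ)).neg.mul hF_meas.comp_fst).add hg_meas.comp_fst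
    have : q = fun p => (-(K p.2) * F p.1 + g p.1) * (-(K p.2) * F p.1 + g p.1) := by
      funext p; rw [hq]; ring
    rw [this]
    exact h1.mul h1
  have hmem_prod : ∀ᵐ p ∂ν2, p ∈ (Icc (0:ℝ) 1) ×ˢ (Icc (0:ℝ) 1) := by
    rw [← hmeq]
    exact ae_restrict_mem (measurableSet_Icc.prod measurableSet_Icc)
  have hq_int : Integrable q ν2 := by
    have hg2 : Integrable (fun p : ℝ × ℝ => (g p.1) ^ 2) ν2 := by
      have h1 : Integrable (fun y => g y ^ 2) μ := hg_mem.integrable_sq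
      have hmp : MeasurePreserving (Prod.fst : ℝ × ℝ → ℝ) ν2 μ :=
        ⟨measurable_fst, by simp [hν2, Measure.map_fst_prod, measure_univ]⟩
      exact (hmp.integrable_comp h1.aestronglyMeasurable).2 h1
    refine Integrable.mono' ((hg2.const_mul 2).add
      (integrable_const (2 * (Real.exp |α| * FB) ^ 2))) hq_meas ?_
    filter_upwards [hmem_prod] with p hp
    have hKb : |K p.2| ≤ Real.exp |α| := by
      rw [hK, abs_of_pos (Real.exp_pos _)]
      apply Real.exp_le_exp.2
      have h1 : |α * p.2| ≤ |α| := by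
        rw [abs_mul]
        calc |α| * |p.2| ≤ |α| * 1 := by
              apply mul_le_mul_of_nonneg_left _ (abs_nonneg α)
              rw [abs_le]; constructor <;> linarith [hp.2.1, hp.2.2]
            _ = |α| := mul_one _
      linarith [(abs_le.1 h1).2]
    have hFb : |F p.1| ≤ FB := by
      have := hFB p.1 hp.1; rwa [Real.norm_eq_abs] at this
    have hFBnn : 0 ≤ FB := le_trans (abs_nonneg _) hFb
    rw [Real.norm_eq_abs, hq, abs_of_nonneg (sq_nonneg _)]
    have key : (-(K p.2) * F p.1 + g p.1) ^ 2 ≤ 2 * (K p.2 * F p.1) ^ 2 + 2 * g p.1 ^ 2 := by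
      nlinarith [sq_nonneg (K p.2 * F p.1 + g p.1), sq_nonneg (K p.2 * F p.1 - g p.1)]
    have key2 : (K p.2 * F p.1) ^ 2 ≤ (Real.exp |α| * FB) ^ 2 := by
      apply sq_le_sq.2
      rw [abs_mul, abs_of_nonneg (by positivity : (0:ℝ) ≤ Real.exp |α| * FB)]
      exact mul_le_mul hKb hFb (abs_nonneg _) (le_trans (abs_nonneg _) hKb)
    calc (-(K p.2) * F p.1 + g p.1) ^ 2 ≤ 2 * (K p.2 * F p.1) ^ 2 + 2 * g p.1 ^ 2 := key
      _ ≤ 2 * (Real.exp |α| * FB) ^ 2 + 2 * g p.1 ^ 2 := by linarith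
      _ = 2 * g p.1 ^ 2 + 2 * (Real.exp |α| * FB) ^ 2 := by ring
  -- the main integral I and the Fubini step
  have hI_eq : ∫ p in (Icc (0:ℝ) 1) ×ˢ (Icc (0:ℝ) 1),
      (-(Real.exp (α * p.2)) * (∫ s in (0:ℝ)..p.1, h s) + h p.1 / lam p.1) ^ 2
      = ∫ y, (∫ v, q (y, v) ∂μ) ∂μ := by
    have h1 : ∫ p in (Icc (0:ℝ) 1) ×ˢ (Icc (0:ℝ) 1),
        (-(Real.exp (α * p.2)) * (∫ s in (0:ℝ)..p.1, h s) + h p.1 / lam p.1) ^ 2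
        = ∫ p, q p ∂ν2 := by
      rw [← hmeq]
    rw [h1, MeasureTheory.integral_prod q hq_int]
  -- Jensen step: pointwise in y
  have hJensen : ∀ y : ℝ, (g y - b * F y) ^ 2 ≤ ∫ v, q (y, v) ∂μ := by
    intro y
    set w : ℝ → ℝ := fun v => g y - K v * F y with hw
    have hw_cont : Continuous w := by
      apply continuous_const.sub (hKcont.mul continuous_const)
    have hw_mem : MemLp w 2 μ := by
      refine MemLp.of_bound hw_cont.aestronglyMeasurable (|g y| + Real.exp |α| * |F y|) ?_
      filter_upwards [ae_restrict_mem measurableSet_Icc] with v hv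
      rw [Real.norm_eq_abs]
      have hKb : |K v| ≤ Real.exp |α| := by
        rw [hK, abs_of_pos (Real.exp_pos _)]
        apply Real.exp_le_exp.2
        have h1 : |α * v| ≤ |α| := by
          rw [abs_mul]
          calc |α| * |v| ≤ |α| * 1 := by
                apply mul_le_mul_of_nonneg_left _ (abs_nonneg α)
                rw [abs_le]; constructor <;> linarith [hv.1, hv.2]
              _ = |α| := mul_one _
        linarith [(abs_le.1 h1).2]
      calc |w v| ≤ |g y| + |K v * F y| := by rw [hw]; exact abs_sub _ _
        _ ≤ |g y| + Real.exp |α| * |F y| := by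
            rw [abs_mul]
            have := mul_le_mul_of_nonneg_right hKb (abs_nonneg (F y))
            linarith
    have hint_w : ∫ v, w v ∂μ = g y - b * F y := by
      rw [hw]
      rw [integral_sub (integrable_const _) ((hKcont.integrableOn_Icc).mul_const _)]
      rw [MeasureTheory.integral_mul_const]
      simp [integral_const, measure_univ, hb, hμ]
    have h2 := sq_integral_le' hw_mem
    rw [hint_w] at h2
    refine h2.trans (le_of_eq ?_)
    apply integral_congr_ae
    filter_upwards with v
    rw [hq, hw]; ring
  have hJ_le : ∫ y, e y ^ 2 ∂μ ≤ ∫ y, (∫ v, q (y, v) ∂μ) ∂μ := by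
    apply integral_mono he_mem.integrable_sq hq_int.integral_prod_left
    intro y
    have := hJensen y
    simpa [hedef] using this
  set J : ℝ := ∫ y, e y ^ 2 ∂μ with hJ
  have hJ0 : 0 ≤ J := integral_nonneg fun y => sq_nonneg _
  set ε : ℝ := Real.sqrt J with hεdef
  have hε0 : 0 ≤ ε := Real.sqrt_nonneg _
  have hε2 : ε ^ 2 = J := Real.sq_sqrt hJ0
  -- ∫|e| ≤ ε
  have he_abs : ∫ y, |e y| ∂μ ≤ ε := by
    have h1 : (∫ y, |e y| ∂μ) ^ 2 ≤ ∫ y, |e y| ^ 2 ∂μ := sq_integral_le' he_mem.abs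
    have h2 : ∫ y, |e y| ^ 2 ∂μ = J := by
      rw [hJ]; apply integral_congr_ae; filter_upwards with y; rw [sq_abs]
    rw [hεdef]
    exact (Real.le_sqrt (integral_nonneg fun _ => abs_nonneg _) hJ0).2 (h1.trans_eq h2)
  -- interval integrability facts
  have hF_int : IntegrableOn (fun s => |F s|) (uIcc (0:ℝ) 1) := by
    rw [uIcc_of_le zero_le_one]
    exact (hF_cont.abs).integrableOn_compact isCompact_Icc
  -- key pointwise inequality for Gronwall
  set φ : ℝ → ℝ := fun x => ∫ s in (0:ℝ)..x, |F s| with hφdef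
  have hφ_cont : ContinuousOn φ (Icc (0:ℝ) 1) := by
    have := intervalIntegral.continuousOn_primitive_interval (μ := volume) (a := (0:ℝ)) (b := 1) hF_int
    rwa [uIcc_of_le zero_le_one] at this
  -- interval integrability helpers
  have hFii : ∀ x ∈ Icc (0:ℝ) 1, IntervalIntegrable (fun s => |F s|) volume 0 x := by
    intro x hx
    have h1 : IntegrableOn (fun s => |F s|) (uIcc 0 x) volume := by
      rw [uIcc_of_le hx.1]
      exact (hF_int.mono_set (by rw [uIcc_of_le zero_le_one]; exact Icc_subset_Icc_right hx.2))
    exact h1.intervalIntegrable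
  have heii : ∀ x ∈ Icc (0:ℝ) 1, IntervalIntegrable (fun s => |e s|) volume 0 x := by
    intro x hx
    have h1 : IntegrableOn (fun s => |e s|) (uIcc 0 x) volume := by
      rw [uIcc_of_le hx.1]
      exact MeasureTheory.IntegrableOn.mono_set (he_int.abs) (Icc_subset_Icc_right hx.2)
    exact h1.intervalIntegrable
  have hhii : ∀ x ∈ Icc (0:ℝ) 1, IntervalIntegrable (fun s => |h s|) volume 0 x := by
    intro x hx
    have h1 : IntegrableOn (fun s => |h s|) (uIcc 0 x) volume := by
      rw [uIcc_of_le hx.1]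
      exact MeasureTheory.IntegrableOn.mono_set (hInt_h.abs) (Icc_subset_Icc_right hx.2)
    exact h1.intervalIntegrable
  -- the key differential inequality
  have key : ∀ x ∈ Icc (0:ℝ) 1, |F x| ≤ M * b * φ x + M * ε := by
    intro x hx
    have hh' : IntervalIntegrable h volume 0 x := by
      have h1 : IntegrableOn h (uIcc 0 x) volume := by
        rw [uIcc_of_le hx.1]
        exact hInt_h.mono_set (Icc_subset_Icc_right hx.2)
      exact h1.intervalIntegrable
    have h1 : |F x| ≤ ∫ s in (0:ℝ)..x, |h s| := by
      rw [hFdef]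
      exact intervalIntegral.abs_integral_le_integral_abs hx.1
    have h2 : ∫ s in (0:ℝ)..x, |h s| ≤ ∫ s in (0:ℝ)..x, (M * b * |F s| + M * |e s|) := by
      apply intervalIntegral.integral_mono_on hx.1 (hhii x hx)
        (((hFii x hx).const_mul (M * b)).add ((heii x hx).const_mul M))
      intro s hs
      have hs1 : s ∈ Icc (0:ℝ) 1 := ⟨hs.1, hs.2.trans hx.2⟩
      have hlam_pos : (0:ℝ) < lam s := lt_of_lt_of_le hc (hlam s hs1)
      have hgs : h s = lam s * g s := by
        rw [hgdef]
        field_simp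
      have hge : g s = b * F s + e s := by rw [hedef]; ring
      calc |h s| = lam s * |g s| := by
            rw [hgs, abs_mul, abs_of_pos hlam_pos]
        _ ≤ M * |g s| := mul_le_mul_of_nonneg_right (hM s hs1) (abs_nonneg _)
        _ = M * |b * F s + e s| := by rw [hge]
        _ ≤ M * (b * |F s| + |e s|) := by
            apply mul_le_mul_of_nonneg_left _ hMpos.le
            calc |b * F s + e s| ≤ |b * F s| + |e s| := abs_add_le _ _
              _ = b * |F s| + |e s| := by rw [abs_mul, abs_of_pos hbpos]
        _ = M * b * |F s| + M * |e s| := by ring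
    have h3 : ∫ s in (0:ℝ)..x, (M * b * |F s| + M * |e s|)
        = M * b * φ x + M * ∫ s in (0:ℝ)..x, |e s| := by
      rw [intervalIntegral.integral_add ((hFii x hx).const_mul (M * b))
        ((heii x hx).const_mul M), intervalIntegral.integral_const_mul,
        intervalIntegral.integral_const_mul, hφdef]
    have h4 : ∫ s in (0:ℝ)..x, |e s| ≤ ε := by
      have h5 : ∫ s in (0:ℝ)..x, |e s| ≤ ∫ s in (0:ℝ)..1, |e s| := by
        apply intervalIntegral.integral_mono_interval le_rfl hx.1 hx.2
        · filter_upwards with s using abs_nonneg _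
        · exact heii 1 (right_mem_Icc.2 zero_le_one)
      have h6 : ∫ s in (0:ℝ)..1, |e s| = ∫ y, |e y| ∂μ := by
        rw [intervalIntegral.integral_of_le zero_le_one, hμ, ← integral_Icc_eq_integral_Ioc]
      linarith [he_abs, h5, h6.le, h6.ge]
    have hM0' : (0:ℝ) ≤ M := hMpos.le
    calc |F x| ≤ ∫ s in (0:ℝ)..x, |h s| := h1
      _ ≤ ∫ s in (0:ℝ)..x, (M * b * |F s| + M * |e s|) := h2
      _ = M * b * φ x + M * ∫ s in (0:ℝ)..x, |e s| := h3
      _ ≤ M * b * φ x + M * ε := by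
          have := mul_le_mul_of_nonneg_left h4 hM0'
          linarith
  -- Gronwall
  have hφ_nonneg : ∀ x ∈ Icc (0:ℝ) 1, 0 ≤ φ x := by
    intro x hx
    exact intervalIntegral.integral_nonneg hx.1 fun s _ => abs_nonneg _
  have hφ' : ∀ x ∈ Ico (0:ℝ) 1, HasDerivWithinAt φ (|F x|) (Ici x) x := by
    intro x hx
    have hxI : x ∈ Icc (0:ℝ) 1 := ⟨hx.1, hx.2.le⟩
    have hmemIoi : Icc (0:ℝ) 1 ∈ nhdsWithin x (Ioi x) := by
      apply Filter.mem_of_superset (Ioc_mem_nhdsGT_of_mem ⟨le_refl x, hx.2⟩)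
      exact fun s hs => ⟨hx.1.trans hs.1.le, hs.2⟩
    apply intervalIntegral.integral_hasDerivWithinAt_right (hFii x hxI)
      (s := Ici x) (t := Ioi x)
    · exact ⟨Icc 0 1, hmemIoi, (hF_cont.abs).aestronglyMeasurable measurableSet_Icc⟩
    · exact ((hF_cont.abs) x hxI).mono_of_mem_nhdsWithin hmemIoi
  have hgron : ∀ x ∈ Icc (0:ℝ) 1, ‖φ x‖ ≤ gronwallBound 0 (M * b) (M * ε) (x - 0) := by
    apply norm_le_gronwallBound_of_norm_deriv_right_le hφ_cont hφ'
    · simp [hφdef]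
    · intro x hx
      have hxI : x ∈ Icc (0:ℝ) 1 := ⟨hx.1, hx.2.le⟩
      rw [Real.norm_eq_abs, Real.norm_eq_abs, abs_abs, abs_of_nonneg (hφ_nonneg x hxI)]
      exact key x hxI
  have hFbound : ∀ x ∈ Icc (0:ℝ) 1, |F x| ≤ B * ε := by
    intro x hx
    have h5 := hgron x hx
    have hKne : M * b ≠ 0 := by positivity
    rw [gronwallBound_of_K_ne_0 hKne, Real.norm_eq_abs, abs_of_nonneg (hφ_nonneg x hx)] at h5
    simp only [zero_mul, zero_add, sub_zero] at h5
    have hE1 : Real.exp (M * b * x) ≤ Real.exp (M * b) := by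
      apply Real.exp_le_exp.2
      have : 0 ≤ M * b * (1 - x) := mul_nonneg (mul_pos hMpos hbpos).le (by linarith [hx.2])
      linarith
    have h6 : M * b * φ x ≤ M * ε * (Real.exp (M * b * x) - 1) := by
      have := mul_le_mul_of_nonneg_left h5 (by positivity : (0:ℝ) ≤ M * b)
      have heq : M * b * (M * ε / (M * b) * (Real.exp (M * b * x) - 1))
          = M * ε * (Real.exp (M * b * x) - 1) := by
        field_simp
      linarith [heq ▸ this]
    have h7 := key x hx
    have hεnn : 0 ≤ M * ε := by positivity
    calc |F x| ≤ M * b * φ x + M * ε := h7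
      _ ≤ M * ε * (Real.exp (M * b * x) - 1) + M * ε := by linarith [h6]
      _ = M * ε * Real.exp (M * b * x) := by ring
      _ ≤ M * ε * Real.exp (M * b) := by nlinarith [hE1, hεnn]
      _ = B * ε := by rw [hBdef]; ring
  -- final assembly
  have hg_sq : ∫ y, g y ^ 2 ∂μ ≤ 2 * b ^ 2 * B ^ 2 * ε ^ 2 + 2 * J := by
    have hptw : ∀ᵐ y ∂μ, g y ^ 2 ≤ 2 * b ^ 2 * B ^ 2 * ε ^ 2 + 2 * e y ^ 2 := by
      filter_upwards [ae_restrict_mem measurableSet_Icc] with y hy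
      have hFy := hFbound y hy
      have hge : g y = b * F y + e y := by rw [hedef]; ring
      have hF2 : F y ^ 2 ≤ B ^ 2 * ε ^ 2 := by
        nlinarith [abs_nonneg (F y), sq_abs (F y), hFy, hBpos.le, hε0]
      rw [hge]
      nlinarith [sq_nonneg (b * F y - e y), mul_le_mul_of_nonneg_left hF2 (sq_nonneg b)]
    have hrint : Integrable (fun y => 2 * b ^ 2 * B ^ 2 * ε ^ 2 + 2 * e y ^ 2) μ :=
      (integrable_const _).add (he_mem.integrable_sq.const_mul 2)
    calc ∫ y, g y ^ 2 ∂μ ≤ ∫ y, (2 * b ^ 2 * B ^ 2 * ε ^ 2 + 2 * e y ^ 2) ∂μ :=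
          integral_mono_ae hg_mem.integrable_sq hrint hptw
      _ = 2 * b ^ 2 * B ^ 2 * ε ^ 2 + 2 * J := by
          rw [integral_add (integrable_const _) (he_mem.integrable_sq.const_mul 2),
            integral_const, MeasureTheory.integral_const_mul]
          simp [measure_univ, hJ]
  have hh_sq : ∫ y, h y ^ 2 ∂μ ≤ M ^ 2 * ∫ y, g y ^ 2 ∂μ := by
    rw [← MeasureTheory.integral_const_mul]
    apply integral_mono_ae hmem.integrable_sq (hg_mem.integrable_sq.const_mul _)
    filter_upwards [ae_restrict_mem measurableSet_Icc] with y hy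
    have hlam_pos : (0:ℝ) < lam y := lt_of_lt_of_le hc (hlam y hy)
    have hgs : h y = lam y * g y := by rw [hgdef]; field_simp
    have hlM := hM y hy
    have h1 : lam y ^ 2 ≤ M ^ 2 := by nlinarith [hlM, hlam_pos]
    calc h y ^ 2 = lam y ^ 2 * g y ^ 2 := by rw [hgs]; ring
      _ ≤ M ^ 2 * g y ^ 2 := mul_le_mul_of_nonneg_right h1 (sq_nonneg _)
  have hDJ : M ^ 2 * (2 * b ^ 2 * B ^ 2 * ε ^ 2 + 2 * J) = D * J := by
    rw [hε2, hDdef]; ring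
  have hmain : Real.sqrt (1 / D) ^ 2 * ∫ y in Icc (0:ℝ) 1, h y ^ 2 ≤
      ∫ p in (Icc (0:ℝ) 1) ×ˢ (Icc (0:ℝ) 1),
        (-(Real.exp (α * p.2)) * (∫ s in (0:ℝ)..p.1, h s) + h p.1 / lam p.1) ^ 2 := by
    rw [hC2, hI_eq]
    have h8 : ∫ y, h y ^ 2 ∂μ ≤ D * J := by
      calc ∫ y, h y ^ 2 ∂μ ≤ M ^ 2 * ∫ y, g y ^ 2 ∂μ := hh_sq
        _ ≤ M ^ 2 * (2 * b ^ 2 * B ^ 2 * ε ^ 2 + 2 * J) := by nlinarith [hg_sq, sq_nonneg M]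
        _ = D * J := hDJ
    have h9 : 1 / D * ∫ y, h y ^ 2 ∂μ ≤ J := by
      rw [div_mul_eq_mul_div, div_le_iff₀ hDpos]
      nlinarith [h8]
    exact h9.trans hJ_le
  refine ⟨hmain, ?_⟩
  intro hzero
  have hI0 : ∫ p in (Icc (0:ℝ) 1) ×ˢ (Icc (0:ℝ) 1),
      (-(Real.exp (α * p.2)) * (∫ s in (0:ℝ)..p.1, h s) + h p.1 / lam p.1) ^ 2 = 0 := by
    have hz2 : ∀ᵐ p ∂(volume.restrict ((Icc (0:ℝ) 1) ×ˢ (Icc (0:ℝ) 1))),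
        (-(Real.exp (α * p.2)) * (∫ s in (0:ℝ)..p.1, h s) + h p.1 / lam p.1) ^ 2 = 0 := by
      filter_upwards [hzero] with p hp
      rw [hp]; ring
    rw [integral_congr_ae hz2, integral_zero]
  have h10 : ∫ y, h y ^ 2 ∂μ ≤ 0 := by
    have := hmain
    rw [hI0, hC2] at this
    have hnn : 0 ≤ ∫ y, h y ^ 2 ∂μ := integral_nonneg fun y => sq_nonneg (h y)
    nlinarith [this, hDpos, hnn]
  have h11 : ∫ y, h y ^ 2 ∂μ = 0 :=
    le_antisymm h10 (integral_nonneg fun y => sq_nonneg _)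
  have h12 : (fun y => h y ^ 2) =ᵐ[μ] 0 :=
    (integral_eq_zero_iff_of_nonneg_ae (Filter.Eventually.of_forall fun y => sq_nonneg _)
      hmem.integrable_sq).1 h11
  filter_upwards [h12] with y hy
  have : h y ^ 2 = 0 := hy
  exact pow_eq_zero_iff two_ne_zero |>.1 this
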